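/- In the monopoly setting, there exists a revenue-maximizing partition π such that SW(π) ≥ (1/2)·OPT, where OPT := max_{π'} SW(π') over all partitions π' of G. -/

import Mathlib

open Finset

variable {B G S : Type*} [Fintype B] [Fintype G] [Fintype S]
variable [DecidableEq B] [DecidableEq G] [DecidableEq S]

/-- `v_b(Ḡ)`: buyer `b`'s total valuation of the variants in `Ḡ`. -/
def vsum (v : B → G → ℕ) (b : B) (Gb : Finset G) : ℕ := ∑ g ∈ Gb, v b g

/-- `V̄1(B̄,Ḡ)`: the largest value among `(v_b(Ḡ))_{b∈B̄}` (`0` if `B̄ = ∅`). -/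
def V1 (v : B → G → ℕ) (Bb : Finset B) (Gb : Finset G) : ℕ :=
  Bb.sup (fun b => vsum v b Gb)

/-- `V̄2(B̄,Ḡ)`: the second-largest value, counted with multiplicity
(`0` if `|B̄| ≤ 1`).  It equals the minimum, over removal of one buyer,
of the maximum over the remaining buyers. -/
def V2 (v : B → G → ℕ) (Bb : Finset B) (Gb : Finset G) : ℕ :=
  if h : Bb.Nonempty then Bb.inf' h (fun b => V1 v (Bb.erase b) Gb) else 0

/-- The set of buyers choosing seller `s` under the assignment `σ`. -/
def buyersOf (σ : B → S) (s : S) : Finset B := univ.filter (fun b => σ b = s)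

/-- Buyer `b`'s utility in the multi-seller game. -/
def ubuyer (v : B → G → ℕ) (τ : S → Finpartition (univ : Finset G)) (σ : B → S) (b : B) : ℚ :=
  (Fintype.card G : ℚ)⁻¹ *
    ∑ Gb ∈ (τ (σ b)).parts, max ((vsum v b Gb : ℚ) - (V2 v (buyersOf σ (σ b)) Gb : ℚ)) 0

/-- Seller `s`'s utility in the multi-seller game. -/
def useller (v : B → G → ℕ) (τ : S → Finpartition (univ : Finset G)) (σ : B → S) (s : S) : ℚ :=
  (Fintype.card G : ℚ)⁻¹ * ∑ Gb ∈ (τ s).parts, (V2 v (buyersOf σ s) Gb : ℚ)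

/-- Social welfare in the multi-seller game. -/
def SWm (v : B → G → ℕ) (τ : S → Finpartition (univ : Finset G)) (σ : B → S) : ℚ :=
  ((Fintype.card S : ℚ) * (Fintype.card G : ℚ))⁻¹ *
    ∑ s : S, ∑ Gb ∈ (τ s).parts, (V1 v (buyersOf σ s) Gb : ℚ)

/-- Social welfare in the single-seller (monopoly) game. -/
def SW1 (v : B → G → ℕ) (π : Finpartition (univ : Finset G)) : ℚ :=
  (Fintype.card G : ℚ)⁻¹ * ∑ Gb ∈ π.parts, (V1 v (univ : Finset B) Gb : ℚ)

/-- The monopolist's revenue. -/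
def rev1 (v : B → G → ℕ) (π : Finpartition (univ : Finset G)) : ℚ :=
  (Fintype.card G : ℚ)⁻¹ * ∑ Gb ∈ π.parts, (V2 v (univ : Finset B) Gb : ℚ)

/-- Buyer `b`'s utility in the monopoly game. -/
def ub1 (v : B → G → ℕ) (π : Finpartition (univ : Finset G)) (b : B) : ℚ :=
  (Fintype.card G : ℚ)⁻¹ *
    ∑ Gb ∈ π.parts, max ((vsum v b Gb : ℚ) - (V2 v (univ : Finset B) Gb : ℚ)) 0

/-- `π` refines `π̂`: every block of `π̂` is a union of blocks of `π`. -/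
def IsRefinement (π πhat : Finpartition (univ : Finset G)) : Prop :=
  ∀ t ∈ πhat.parts, ∃ P ⊆ π.parts, t = P.sup id

/-- `σ` is a (pure) Nash equilibrium of the buyers' subgame induced by `τ`. -/
def IsNash (v : B → G → ℕ) (τ : S → Finpartition (univ : Finset G)) (σ : B → S) : Prop :=
  ∀ (b : B) (s : S), ubuyer v τ (Function.update σ b s) b ≤ ubuyer v τ σ b

/-- `p^i(G)`: the number of goods demanded by at least `i` buyers. -/
def pdem (v : B → G → ℕ) (i : ℕ) : ℕ :=
  (univ.filter (fun g : G => i ≤ ∑ b : B, v b g)).card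

/-- The trivial (indiscrete) partition `{G}`, which discloses nothing. -/
def trivPart (G : Type*) [Fintype G] [DecidableEq G] [Nonempty G] :
    Finpartition (univ : Finset G) :=
  Finpartition.indiscrete Finset.univ_nonempty.ne_empty

/-- `(π, f)` is a pure subgame perfect equilibrium of the two-stage game. -/
def IsSPE (v : B → G → ℕ) (π : S → Finpartition (univ : Finset G))
    (f : (S → Finpartition (univ : Finset G)) → (B → S)) : Prop :=
  (∀ τ, IsNash v τ (f τ)) ∧
  ∀ (s : S) (ρ : Finpartition (univ : Finset G)),
    useller v (Function.update π s ρ) (f (Function.update π s ρ)) s ≤ useller v π (f π) s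

set_option linter.unusedSectionVars false

lemma vsum_mono' (v : B → G → ℕ) (b : B) {s t : Finset G} (h : s ⊆ t) :
    vsum v b s ≤ vsum v b t :=
  Finset.sum_le_sum_of_subset h

lemma V1_mono_right' (v : B → G → ℕ) (Bb : Finset B) {s t : Finset G} (h : s ⊆ t) :
    V1 v Bb s ≤ V1 v Bb t :=
  Finset.sup_mono_fun fun b _ => vsum_mono' v b h

lemma V1_mono_left' (v : B → G → ℕ) {B1 B2 : Finset B} (h : B1 ⊆ B2) (s : Finset G) :
    V1 v B1 s ≤ V1 v B2 s :=
  Finset.sup_mono h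

/-- sum of a function over the blocks of a partition of univ -/
lemma sum_parts_sum' (π : Finpartition (univ : Finset G)) (f : G → ℕ) :
    ∑ T ∈ π.parts, ∑ g ∈ T, f g = ∑ g, f g := by
  have h : (univ : Finset G) = π.parts.biUnion id := by
    rw [← Finset.sup_eq_biUnion, π.sup_parts]
  conv_rhs => rw [h]
  rw [Finset.sum_biUnion (π.supIndep.pairwiseDisjoint)]
  rfl

lemma exists_split' (π : Finpartition (univ : Finset G)) {T : Finset G} {u : G}
    (hT : T ∈ π.parts) (hu : u ∈ T) (hne : (T.erase u).Nonempty) :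
    ∃ π' : Finpartition (univ : Finset G),
      ∀ f : Finset G → ℕ,
        (∑ P ∈ π'.parts, f P) + f T
          = f {u} + f (T.erase u) + ∑ P ∈ π.parts, f P := by
  classical
  set s0 := π.parts.erase T with hs0
  have hdisj : ∀ P ∈ s0, Disjoint T P := by
    intro P hP
    exact π.disjoint (Finset.mem_coe.mpr hT)
      (Finset.mem_coe.mpr (Finset.mem_of_mem_erase hP))
      (fun h => absurd hP (by rw [← show T = P from h]; exact Finset.notMem_erase T π.parts))
  have h2 : T.erase u ∉ s0 := by
    intro h
    obtain ⟨g, hg⟩ := hne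
    exact (Finset.disjoint_left.mp (hdisj _ h) (Finset.mem_of_mem_erase hg)) hg
  have h1 : ({u} : Finset G) ∉ insert (T.erase u) s0 := by
    intro h
    rcases Finset.mem_insert.mp h with h | h
    · exact (Finset.notMem_erase u T) (h ▸ Finset.mem_singleton_self u)
    · exact (Finset.disjoint_left.mp (hdisj _ h) hu) (Finset.mem_singleton_self u)
  have hsupT : ({u} : Finset G) ⊔ T.erase u = T := by
    rw [Finset.sup_eq_union, ← Finset.insert_eq, Finset.insert_erase hu]
  have hsup0 : T ⊔ s0.sup id = (univ : Finset G) := by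
    have h := π.sup_parts
    rw [← Finset.insert_erase hT, Finset.sup_insert] at h
    exact h
  refine ⟨⟨insert {u} (insert (T.erase u) s0), ?_, ?_, ?_⟩, ?_⟩
  · rw [Finset.supIndep_iff_pairwiseDisjoint]
    simp only [Finset.coe_insert]
    rw [Set.pairwiseDisjoint_insert, Set.pairwiseDisjoint_insert]
    refine ⟨⟨π.disjoint.subset ?_, ?_⟩, ?_⟩
    · intro P hP; exact Finset.mem_coe.mpr (Finset.mem_of_mem_erase (Finset.mem_coe.mp hP))
    · intro P hP _
      exact Finset.disjoint_of_subset_left (Finset.erase_subset u T) (hdisj P (Finset.mem_coe.mp hP))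
    · intro P hP _
      rcases Set.mem_insert_iff.mp hP with rfl | hP
      · exact Finset.disjoint_singleton_left.mpr (Finset.notMem_erase u T)
      · exact Finset.disjoint_of_subset_left
          (Finset.singleton_subset_iff.mpr hu) (hdisj P (Finset.mem_coe.mp hP))
  · rw [Finset.sup_insert, Finset.sup_insert, id, id, ← sup_assoc, hsupT, hsup0]
  · intro h
    rcases Finset.mem_insert.mp h with h | h
    · exact (Finset.singleton_ne_empty u) h.symm
    rcases Finset.mem_insert.mp h with h | h
    · exact hne.ne_empty h.symm
    · exact π.bot_notMem (Finset.mem_of_mem_erase h)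
  · intro f
    rw [Finset.sum_insert h1, Finset.sum_insert h2,
      ← Finset.add_sum_erase _ f hT]
    ring

/-- number of demanded goods -/
def dDem (v : B → G → ℕ) : ℕ := (univ.filter fun g : G => 0 < ∑ b : B, v b g).card

lemma V2_le_V1' [Nonempty B] (v : B → G → ℕ) (T : Finset G) :
    V2 v univ T ≤ V1 v univ T := by
  unfold V2
  rw [dif_pos Finset.univ_nonempty]
  exact le_trans (Finset.inf'_le _ (mem_univ (Classical.arbitrary B)))
    (V1_mono_left' v (Finset.subset_univ _) T)

lemma card_A' (v : B → G → ℕ) (hv : ∀ b g, v b g ≤ 1) (b : B) (T : Finset G) :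
    (T.filter fun g => v b g = 1).card = vsum v b T := by
  rw [Finset.card_filter]
  unfold vsum
  refine Finset.sum_congr rfl fun g _ => ?_
  have := hv b g
  split_ifs with h <;> omega

lemma swN_le' [Nonempty B] (v : B → G → ℕ) (hv : ∀ b g, v b g ≤ 1)
    (π : Finpartition (univ : Finset G)) :
    ∑ P ∈ π.parts, V1 v univ P ≤ dDem v := by
  unfold dDem
  rw [Finset.card_filter, ← sum_parts_sum' π (fun g => if 0 < ∑ b : B, v b g then 1 else 0)]
  refine Finset.sum_le_sum fun T _ => ?_
  refine Finset.sup_le fun b _ => ?_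
  unfold vsum
  refine Finset.sum_le_sum fun g _ => ?_
  split_ifs with h
  · exact hv b g
  · have h0 : ∑ b' : B, v b' g = 0 := by omega
    have h1 : v b g ≤ ∑ b' : B, v b' g :=
      Finset.single_le_sum (f := fun b' => v b' g) (fun b' _ => Nat.zero_le _) (mem_univ b)
    omega

lemma dT_sum' [Nonempty B] (v : B → G → ℕ) (π : Finpartition (univ : Finset G)) :
    ∑ T ∈ π.parts, (T.filter fun g => 0 < ∑ b : B, v b g).card = dDem v := by
  unfold dDem
  rw [Finset.card_filter, ← sum_parts_sum' π (fun g => if 0 < ∑ b : B, v b g then 1 else 0)]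
  exact Finset.sum_congr rfl fun T _ => Finset.card_filter _ _

lemma key_part [Nonempty B] (v : B → G → ℕ) (hv : ∀ b g, v b g ≤ 1)
    (π : Finpartition (univ : Finset G))
    (hmax : ∀ π' : Finpartition (univ : Finset G),
      (dDem v + 1) * (∑ P ∈ π'.parts, V2 v univ P) + ∑ P ∈ π'.parts, V1 v univ P
        ≤ (dDem v + 1) * (∑ P ∈ π.parts, V2 v univ P) + ∑ P ∈ π.parts, V1 v univ P)
    {T : Finset G} (hT : T ∈ π.parts) :
    (T.filter fun g => 0 < ∑ b : B, v b g).card ≤ V1 v univ T + V2 v univ T := by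
  classical
  by_contra hlt
  push_neg at hlt
  -- top buyer b1
  obtain ⟨b1, -, hb1⟩ := Finset.exists_mem_eq_sup (univ : Finset B) Finset.univ_nonempty
    (fun b => vsum v b T)
  have hb1 : V1 v univ T = vsum v b1 T := hb1
  -- second buyer b2 (or b1 itself if there is only one buyer)
  obtain ⟨b2, hb2card, hb2low⟩ : ∃ b2 : B,
      ((T.filter fun g => v b1 g = 1) ∪ (T.filter fun g => v b2 g = 1)).card
          ≤ V1 v univ T + V2 v univ T ∧
      ∀ u ∈ T, v b1 u = 0 → v b2 u = 0 → V2 v univ T ≤ V2 v univ (T.erase u) := by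
    by_cases h : (Finset.univ.erase b1).Nonempty
    · have hV2 : V2 v univ T = V1 v (univ.erase b1) T := by
        unfold V2
        rw [dif_pos Finset.univ_nonempty]
        refine le_antisymm (Finset.inf'_le _ (mem_univ b1)) (Finset.le_inf' _ _ fun b _ => ?_)
        by_cases hb : b = b1
        · subst hb; exact le_rfl
        · refine le_trans (V1_mono_left' v (Finset.subset_univ _) T) ?_
          rw [hb1]
          exact Finset.le_sup (f := fun b' => vsum v b' T)
            (Finset.mem_erase.mpr ⟨fun hh => hb hh.symm, mem_univ b1⟩)
      obtain ⟨b2, hb2mem, hb2⟩ := Finset.exists_mem_eq_sup _ h (fun b => vsum v b T)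
      have hb2v : V2 v univ T = vsum v b2 T := hV2.trans hb2
      have hb2ne : b2 ≠ b1 := (Finset.mem_erase.mp hb2mem).1
      refine ⟨b2, ?_, ?_⟩
      · calc ((T.filter fun g => v b1 g = 1) ∪ (T.filter fun g => v b2 g = 1)).card
            ≤ (T.filter fun g => v b1 g = 1).card + (T.filter fun g => v b2 g = 1).card :=
              Finset.card_union_le _ _
          _ = vsum v b1 T + vsum v b2 T := by rw [card_A' v hv, card_A' v hv]
          _ = V1 v univ T + V2 v univ T := by rw [hb1, hb2v]
      · intro u hu h10 h20
        rw [hb2v]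
        unfold V2
        rw [dif_pos Finset.univ_nonempty]
        refine Finset.le_inf' _ _ fun b _ => ?_
        have e1 : vsum v b1 (T.erase u) = vsum v b1 T := Finset.sum_erase T h10
        have e2 : vsum v b2 (T.erase u) = vsum v b2 T := Finset.sum_erase T h20
        by_cases hbb : b = b1
        · rw [← e2]
          exact Finset.le_sup (f := fun b' => vsum v b' (T.erase u))
            (Finset.mem_erase.mpr ⟨by rw [hbb]; exact hb2ne, mem_univ b2⟩)
        · have h3 : vsum v b2 T ≤ vsum v b1 (T.erase u) := by
            rw [e1, ← hb1]
            exact Finset.le_sup (f := fun b' => vsum v b' T) (mem_univ b2)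
          exact h3.trans (Finset.le_sup (f := fun b' => vsum v b' (T.erase u))
            (Finset.mem_erase.mpr ⟨fun hh => hbb hh.symm, mem_univ b1⟩))
    · -- only one buyer: V2 = 0
      have hz : V2 v univ T = 0 := by
        have hle : V2 v univ T ≤ V1 v (univ.erase b1) T := by
          unfold V2
          rw [dif_pos Finset.univ_nonempty]
          exact Finset.inf'_le _ (mem_univ b1)
        rw [Finset.not_nonempty_iff_eq_empty.mp h] at hle
        simpa [V1] using hle
      refine ⟨b1, ?_, ?_⟩
      · rw [Finset.union_self, card_A' v hv, ← hb1]
        exact Nat.le_add_right _ _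
      · intro u _ _ _
        rw [hz]
        exact Nat.zero_le _
  -- find the good u
  have hsubaux : ∀ b : B,
      (T.filter fun g => v b g = 1) ⊆ T.filter fun g => 0 < ∑ b' : B, v b' g := by
    intro b g hg
    rw [Finset.mem_filter] at hg ⊢
    refine ⟨hg.1, ?_⟩
    have h1 : v b g ≤ ∑ b' : B, v b' g :=
      Finset.single_le_sum (f := fun b' => v b' g) (fun b' _ => Nat.zero_le _) (mem_univ b)
    omega
  have hne' : ¬ ((T.filter fun g => 0 < ∑ b : B, v b g)
      ⊆ (T.filter fun g => v b1 g = 1) ∪ (T.filter fun g => v b2 g = 1)) := by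
    intro hsub'
    have := Finset.card_le_card hsub'
    omega
  obtain ⟨u, huD, huA⟩ := Finset.not_subset.mp hne'
  have huT : u ∈ T := (Finset.mem_filter.mp huD).1
  have hDem : 0 < ∑ b : B, v b u := (Finset.mem_filter.mp huD).2
  have h10 : v b1 u = 0 := by
    have h := hv b1 u
    rcases Nat.lt_or_ge (v b1 u) 1 with h' | h'
    · omega
    · exact absurd (Finset.mem_union_left _ (Finset.mem_filter.mpr ⟨huT, by omega⟩)) huA
  have h20 : v b2 u = 0 := by
    have h := hv b2 u
    rcases Nat.lt_or_ge (v b2 u) 1 with h' | h'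
    · omega
    · exact absurd (Finset.mem_union_right _ (Finset.mem_filter.mpr ⟨huT, by omega⟩)) huA
  -- some buyer demands u
  obtain ⟨b0, hb0⟩ : ∃ b : B, v b u = 1 := by
    by_contra hno
    push_neg at hno
    have : ∑ b : B, v b u = 0 :=
      Finset.sum_eq_zero fun b _ => by have := hv b u; have := hno b; omega
    omega
  have hV1u : 1 ≤ V1 v univ {u} := by
    have h5 : vsum v b0 {u} = 1 := by unfold vsum; rw [Finset.sum_singleton, hb0]
    calc (1 : ℕ) = vsum v b0 {u} := h5.symm
      _ ≤ V1 v univ {u} := Finset.le_sup (f := fun b' => vsum v b' {u}) (mem_univ b0)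
  have hV1T : 1 ≤ V1 v univ T := by
    have h4 : 1 ≤ vsum v b0 T := by
      have h6 : v b0 u ≤ vsum v b0 T :=
        Finset.single_le_sum (f := fun g => v b0 g) (fun g _ => Nat.zero_le _) huT
      omega
    exact h4.trans (Finset.le_sup (f := fun b' => vsum v b' T) (mem_univ b0))
  -- T.erase u is nonempty
  have hcardT : 2 ≤ T.card := by
    have h1 : (T.filter fun g => 0 < ∑ b : B, v b g).card ≤ T.card :=
      Finset.card_le_card (Finset.filter_subset _ _)
    omega
  have hne : (T.erase u).Nonempty := by
    rw [← Finset.card_pos, Finset.card_erase_of_mem huT]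
    omega
  obtain ⟨π', hπ'⟩ := exists_split' π hT huT hne
  have e1 := hπ' (fun P => V1 v univ P)
  have e2 := hπ' (fun P => V2 v univ P)
  have hV1e : V1 v univ T ≤ V1 v univ (T.erase u) := by
    have e0 : vsum v b1 (T.erase u) = vsum v b1 T := Finset.sum_erase T h10
    rw [hb1, ← e0]
    exact Finset.le_sup (f := fun b' => vsum v b' (T.erase u)) (mem_univ b1)
  have hV2e : V2 v univ T ≤ V2 v univ (T.erase u) := hb2low u huT h10 h20
  -- contradiction with maximality
  have hrv : ∑ P ∈ π.parts, V2 v univ P ≤ ∑ P ∈ π'.parts, V2 v univ P := by omega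
  have hsw : (∑ P ∈ π.parts, V1 v univ P) + 1 ≤ ∑ P ∈ π'.parts, V1 v univ P := by omega
  have hm := hmax π'
  have hmul : (dDem v + 1) * (∑ P ∈ π.parts, V2 v univ P)
      ≤ (dDem v + 1) * (∑ P ∈ π'.parts, V2 v univ P) :=
    Nat.mul_le_mul_left _ hrv
  omega


/-- some revenue-maximizing partition attains at least half of
the optimal social welfare. -/
theorem exists_revmax_sw_ge_half_opt [Nonempty B] [Nonempty G]
    (v : B → G → ℕ) (hv : ∀ b g, v b g ≤ 1) :
    ∃ π : Finpartition (univ : Finset G),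
      (∀ π' : Finpartition (univ : Finset G), rev1 v π' ≤ rev1 v π) ∧
      ∀ π' : Finpartition (univ : Finset G), (1 / 2 : ℚ) * SW1 v π' ≤ SW1 v π := by
  classical
  obtain ⟨π, -, hmax⟩ := Finset.exists_max_image
    (univ : Finset (Finpartition (univ : Finset G)))
    (fun π => (dDem v + 1) * (∑ P ∈ π.parts, V2 v univ P) + ∑ P ∈ π.parts, V1 v univ P)
    ⟨trivPart G, mem_univ _⟩
  have hmax' : ∀ π' : Finpartition (univ : Finset G),
      (dDem v + 1) * (∑ P ∈ π'.parts, V2 v univ P) + ∑ P ∈ π'.parts, V1 v univ P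
        ≤ (dDem v + 1) * (∑ P ∈ π.parts, V2 v univ P) + ∑ P ∈ π.parts, V1 v univ P :=
    fun π' => hmax π' (mem_univ _)
  have hswle : ∀ π' : Finpartition (univ : Finset G),
      ∑ P ∈ π'.parts, V1 v univ P ≤ dDem v := fun π' => swN_le' v hv π'
  -- revenue maximality
  have hrev : ∀ π' : Finpartition (univ : Finset G),
      ∑ P ∈ π'.parts, V2 v univ P ≤ ∑ P ∈ π.parts, V2 v univ P := by
    intro π'
    by_contra h
    push_neg at h
    have h1 : (dDem v + 1) * ((∑ P ∈ π.parts, V2 v univ P) + 1)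
        ≤ (dDem v + 1) * (∑ P ∈ π'.parts, V2 v univ P) := Nat.mul_le_mul_left _ h
    have h2 := hmax' π'
    have h3 := hswle π
    rw [Nat.mul_add, Nat.mul_one] at h1
    omega
  -- welfare lower bound: dDem v ≤ 2 * sw π
  have hd2 : dDem v ≤ 2 * ∑ P ∈ π.parts, V1 v univ P := by
    have hkey : ∀ T ∈ π.parts,
        (T.filter fun g => 0 < ∑ b : B, v b g).card ≤ V1 v univ T + V2 v univ T :=
      fun T hT => key_part v hv π hmax' hT
    have h1 : dDem v ≤ ∑ T ∈ π.parts, (V1 v univ T + V2 v univ T) := by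
      rw [← dT_sum' v π]
      exact Finset.sum_le_sum hkey
    have h2 : ∑ T ∈ π.parts, (V1 v univ T + V2 v univ T)
        = (∑ P ∈ π.parts, V1 v univ P) + ∑ P ∈ π.parts, V2 v univ P :=
      Finset.sum_add_distrib
    have h3 : ∑ P ∈ π.parts, V2 v univ P ≤ ∑ P ∈ π.parts, V1 v univ P :=
      Finset.sum_le_sum fun P _ => V2_le_V1' v P
    omega
  have hcinv : (0 : ℚ) ≤ (Fintype.card G : ℚ)⁻¹ :=
    inv_nonneg.mpr (Nat.cast_nonneg _)
  refine ⟨π, ?_, ?_⟩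
  · intro π'
    unfold rev1
    have hcast : ∀ ρ : Finpartition (univ : Finset G),
        ∑ Gb ∈ ρ.parts, ((V2 v (univ : Finset B) Gb : ℕ) : ℚ)
          = ((∑ P ∈ ρ.parts, V2 v univ P : ℕ) : ℚ) := fun ρ => (Nat.cast_sum _ _).symm
    rw [hcast, hcast]
    exact mul_le_mul_of_nonneg_left (by exact_mod_cast hrev π') hcinv
  · intro π'
    unfold SW1
    have hcast : ∀ ρ : Finpartition (univ : Finset G),
        ∑ Gb ∈ ρ.parts, ((V1 v (univ : Finset B) Gb : ℕ) : ℚ)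
          = ((∑ P ∈ ρ.parts, V1 v univ P : ℕ) : ℚ) := fun ρ => (Nat.cast_sum _ _).symm
    rw [hcast, hcast]
    have ha : ((∑ P ∈ π'.parts, V1 v univ P : ℕ) : ℚ)
        ≤ 2 * ((∑ P ∈ π.parts, V1 v univ P : ℕ) : ℚ) := by
      have := (hswle π').trans hd2
      exact_mod_cast this
    have hb := mul_le_mul_of_nonneg_left ha hcinv
    set x : ℚ := (Fintype.card G : ℚ)⁻¹
    set A : ℚ := ((∑ P ∈ π'.parts, V1 v univ P : ℕ) : ℚ)
    set C : ℚ := ((∑ P ∈ π.parts, V1 v univ P : ℕ) : ℚ)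
    have hb' : x * A ≤ 2 * (x * C) := by rw [show 2 * (x * C) = x * (2 * C) by ring]; exact hb
    linarith
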